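/- Let λ₁, λ₂ > 0 and consider the planar Hamiltonian system with H(ξ₁,ξ₂) = λ₁ξ₁² + λ₂ξ₂² and equations ξ̇₁ = ∂H/∂ξ₂, ξ̇₂ = -∂H/∂ξ₁. Rotating coordinates by angle φ, the resulting components ε₁, ε₂ of the solution oscillate with a phase shift Φ(ρ,φ) = π/2 + arctan(ρ tan φ) - arctan(ρ⁻¹ tan φ), where ρ = √(λ₁/λ₂), for φ ∈ (-π/2, π/2). -/

import Mathlib

open Real

set_option maxHeartbeats 1000000

theorem rotated_oscillation_phase_shift (lam1 lam2 : ℝ)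
    (h1 : 0 < lam1) (h2 : 0 < lam2)
    (φ : ℝ) (hφ : φ ∈ Set.Ioo (-(π / 2)) (π / 2))
    (ρ ω : ℝ) (hρ : ρ = Real.sqrt (lam1 / lam2)) (hω : ω = 2 * Real.sqrt (lam1 * lam2))
    (ξ₁ ξ₂ : ℝ → ℝ)
    (hode1 : ∀ t : ℝ, HasDerivAt ξ₁ (2 * lam2 * ξ₂ t) t)
    (hode2 : ∀ t : ℝ, HasDerivAt ξ₂ (-(2 * lam1 * ξ₁ t)) t)
    (hnontriv : ξ₁ 0 ≠ 0 ∨ ξ₂ 0 ≠ 0)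
    (ε₁ ε₂ : ℝ → ℝ)
    (hε1 : ∀ t, ε₁ t = Real.cos φ * ξ₁ t - Real.sin φ * ξ₂ t)
    (hε2 : ∀ t, ε₂ t = Real.sin φ * ξ₁ t + Real.cos φ * ξ₂ t) :
    ∃ A₁ A₂ θ₁ θ₂ : ℝ, 0 < A₁ ∧ 0 < A₂ ∧
      (∀ t, ε₁ t = A₁ * Real.cos (ω * t + θ₁)) ∧
      (∀ t, ε₂ t = A₂ * Real.cos (ω * t + θ₂)) ∧
      θ₂ - θ₁ = π / 2 + Real.arctan (ρ * Real.tan φ) - Real.arctan (ρ⁻¹ * Real.tan φ) := by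
  obtain ⟨hφ1, hφ2⟩ := hφ
  have hc : 0 < Real.cos φ := Real.cos_pos_of_mem_Ioo ⟨hφ1, hφ2⟩
  have hρpos : 0 < ρ := hρ ▸ Real.sqrt_pos.2 (div_pos h1 h2)
  have hρsq : ρ ^ 2 = lam1 / lam2 := by rw [hρ, sq_sqrt (div_pos h1 h2).le]
  have hωsq : ω ^ 2 = 4 * (lam1 * lam2) := by
    rw [hω, mul_pow, sq_sqrt (mul_nonneg h1.le h2.le)]; ring
  have hωpos : 0 < ω := hω ▸ by positivity
  have hω1 : ρ * (2 * lam2) = ω := by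
    have hsq : (ρ * (2 * lam2)) ^ 2 = ω ^ 2 := by
      rw [mul_pow, hρsq, hωsq]; field_simp; ring
    nlinarith [sq_nonneg (ρ * (2 * lam2) - ω), mul_pos hρpos (by linarith : (0:ℝ) < 2 * lam2)]
  have hω2 : ω * ρ = 2 * lam1 := by
    have hsq : (ω * ρ) ^ 2 = (2 * lam1) ^ 2 := by
      rw [mul_pow, hρsq, hωsq]; field_simp; ring
    nlinarith [mul_pos hωpos hρpos, sq_nonneg (ω * ρ - 2 * lam1)]
  -- the solution of the ODE
  set a : ℝ := ρ * ξ₁ 0 with ha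
  set b : ℝ := ξ₂ 0 with hb
  have hu : ∀ t, HasDerivAt (fun t => ρ * ξ₁ t) (ω * ξ₂ t) t := by
    intro t
    have h := (hode1 t).const_mul ρ
    exact h.congr_deriv (by rw [← hω1]; ring)
  have hv : ∀ t, HasDerivAt ξ₂ (-(ω * (ρ * ξ₁ t))) t := by
    intro t
    have h := hode2 t
    convert h using 1
    rw [show ω * (ρ * ξ₁ t) = ω * ρ * ξ₁ t by ring, hω2]
  have hlin : ∀ t : ℝ, HasDerivAt (fun t : ℝ => ω * t) ω t := by
    intro t; simpa using (hasDerivAt_id t).const_mul ω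
  have hcos : ∀ t : ℝ, HasDerivAt (fun t => Real.cos (ω * t)) (-Real.sin (ω * t) * ω) t :=
    fun t => (Real.hasDerivAt_cos (ω * t)).comp t (hlin t)
  have hsin : ∀ t : ℝ, HasDerivAt (fun t => Real.sin (ω * t)) (Real.cos (ω * t) * ω) t :=
    fun t => (Real.hasDerivAt_sin (ω * t)).comp t (hlin t)
  set F : ℝ → ℝ := fun t => ρ * ξ₁ t * Real.cos (ω * t) - ξ₂ t * Real.sin (ω * t) with hFdef
  set G : ℝ → ℝ := fun t => ρ * ξ₁ t * Real.sin (ω * t) + ξ₂ t * Real.cos (ω * t) with hGdef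
  have hF : ∀ t, HasDerivAt F 0 t := by
    intro t
    have h := ((hu t).mul (hcos t)).sub ((hv t).mul (hsin t))
    exact h.congr_deriv (by ring)
  have hG : ∀ t, HasDerivAt G 0 t := by
    intro t
    have h := ((hu t).mul (hsin t)).add ((hv t).mul (hcos t))
    exact h.congr_deriv (by ring)
  have hFc : ∀ t, F t = a := by
    intro t
    have := is_const_of_deriv_eq_zero (f := F)
      (fun x => (hF x).differentiableAt) (fun x => (hF x).deriv) t 0
    simpa [hFdef] using this
  have hGc : ∀ t, G t = b := by
    intro t
    have := is_const_of_deriv_eq_zero (f := G)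
      (fun x => (hG x).differentiableAt) (fun x => (hG x).deriv) t 0
    simpa [hGdef] using this
  have hpyth : ∀ t : ℝ, Real.sin (ω * t) ^ 2 + Real.cos (ω * t) ^ 2 = 1 :=
    fun t => Real.sin_sq_add_cos_sq (ω * t)
  have hsol1 : ∀ t, ρ * ξ₁ t = a * Real.cos (ω * t) + b * Real.sin (ω * t) := by
    intro t
    have hFt := hFc t
    have hGt := hGc t
    simp only [hFdef, hGdef] at hFt hGt
    linear_combination Real.cos (ω * t) * hFt + Real.sin (ω * t) * hGt -
      (ρ * ξ₁ t) * hpyth t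
  have hsol2 : ∀ t, ξ₂ t = -a * Real.sin (ω * t) + b * Real.cos (ω * t) := by
    intro t
    have hFt := hFc t
    have hGt := hGc t
    simp only [hFdef, hGdef] at hFt hGt
    linear_combination (-Real.sin (ω * t)) * hFt + Real.cos (ω * t) * hGt -
      (ξ₂ t) * hpyth t
  -- amplitudes and phases
  set c : ℝ := Real.cos φ with hcdef
  set s : ℝ := Real.sin φ with hsdef
  have htan : Real.tan φ = s / c := Real.tan_eq_sin_div_cos φ
  set r₁ : ℝ := Real.sqrt (c ^ 2 + ρ ^ 2 * s ^ 2) with hr1def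
  set r₂ : ℝ := Real.sqrt (ρ ^ 2 * c ^ 2 + s ^ 2) with hr2def
  have hr1pos : 0 < r₁ := Real.sqrt_pos.2 (by positivity)
  have hr2pos : 0 < r₂ := Real.sqrt_pos.2 (by positivity)
  set α : ℝ := Real.arctan (ρ * Real.tan φ) with hαdef
  set β : ℝ := Real.arctan (ρ⁻¹ * Real.tan φ) with hβdef
  have hcosα : Real.cos α = c / r₁ := by
    rw [hαdef, Real.cos_arctan]
    have h1 : 1 + (ρ * Real.tan φ) ^ 2 = (c ^ 2 + ρ ^ 2 * s ^ 2) / c ^ 2 := by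
      rw [htan]; field_simp
    rw [h1, Real.sqrt_div (by positivity) (c ^ 2), Real.sqrt_sq hc.le, ← hr1def, one_div_div]
  have hsinα : Real.sin α = ρ * s / r₁ := by
    rw [hαdef, Real.sin_arctan]
    have h1 : 1 + (ρ * Real.tan φ) ^ 2 = (c ^ 2 + ρ ^ 2 * s ^ 2) / c ^ 2 := by
      rw [htan]; field_simp
    rw [h1, Real.sqrt_div (by positivity) (c ^ 2), Real.sqrt_sq hc.le, ← hr1def, htan]
    field_simp
  have hcosβ : Real.cos β = ρ * c / r₂ := by
    rw [hβdef, Real.cos_arctan]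
    have h1 : 1 + (ρ⁻¹ * Real.tan φ) ^ 2 = (ρ ^ 2 * c ^ 2 + s ^ 2) / (ρ * c) ^ 2 := by
      rw [htan]; field_simp
    rw [h1, Real.sqrt_div (by positivity) ((ρ * c) ^ 2),
      Real.sqrt_sq (by positivity : (0:ℝ) ≤ ρ * c), ← hr2def, one_div_div]
  have hsinβ : Real.sin β = s / r₂ := by
    rw [hβdef, Real.sin_arctan]
    have h1 : 1 + (ρ⁻¹ * Real.tan φ) ^ 2 = (ρ ^ 2 * c ^ 2 + s ^ 2) / (ρ * c) ^ 2 := by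
      rw [htan]; field_simp
    rw [h1, Real.sqrt_div (by positivity) ((ρ * c) ^ 2),
      Real.sqrt_sq (by positivity : (0:ℝ) ≤ ρ * c), ← hr2def, htan]
    field_simp
  -- a polar angle for (a, b)
  set z : ℂ := (a : ℂ) + (b : ℂ) * Complex.I with hzdef
  have hzre : z.re = a := by simp [hzdef]
  have hzim : z.im = b := by simp [hzdef]
  have hab : a ≠ 0 ∨ b ≠ 0 := by
    rcases hnontriv with h | h
    · exact Or.inl (by simp [ha]; exact ⟨hρpos.ne', h⟩)
    · exact Or.inr h
  have hz : z ≠ 0 := by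
    intro h
    rcases hab with h' | h'
    · exact h' (by rw [← hzre, h]; simp)
    · exact h' (by rw [← hzim, h]; simp)
  set R : ℝ := ‖z‖ with hRdef
  have hRpos : 0 < R := by simpa [hRdef] using (norm_pos_iff.mpr hz)
  set θ₀ : ℝ := z.arg with hθ₀def
  have hcosθ₀ : Real.cos θ₀ = a / R := by
    rw [hθ₀def, Complex.cos_arg hz, hzre]
  have hsinθ₀ : Real.sin θ₀ = b / R := by
    rw [hθ₀def, Complex.sin_arg, hzim]
  clear_value a b F G c s r₁ r₂ α β z R θ₀
  have hρ0 : ρ ≠ 0 := hρpos.ne'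
  have hR0 : R ≠ 0 := hRpos.ne'
  have hr10 : r₁ ≠ 0 := hr1pos.ne'
  have hr20 : r₂ ≠ 0 := hr2pos.ne'
  refine ⟨R * r₁ / ρ, R * r₂ / ρ, -(θ₀ + α), π / 2 - (θ₀ + β), by positivity, by positivity,
    ?_, ?_, by ring⟩
  · intro t
    rw [hε1 t, hsol2 t]
    have hξ1t : ξ₁ t = (a * Real.cos (ω * t) + b * Real.sin (ω * t)) / ρ := by
      field_simp
      linarith [hsol1 t]
    rw [hξ1t]
    have hexp : Real.cos (ω * t + -(θ₀ + α)) =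
        Real.cos (ω * t) * (Real.cos θ₀ * Real.cos α - Real.sin θ₀ * Real.sin α) +
        Real.sin (ω * t) * (Real.sin θ₀ * Real.cos α + Real.cos θ₀ * Real.sin α) := by
      rw [Real.cos_add, Real.cos_neg, Real.sin_neg, Real.cos_add, Real.sin_add]
      ring
    rw [hexp, hcosθ₀, hsinθ₀, hcosα, hsinα]
    field_simp
    ring
  · intro t
    rw [hε2 t, hsol2 t]
    have hξ1t : ξ₁ t = (a * Real.cos (ω * t) + b * Real.sin (ω * t)) / ρ := by
      field_simp
      linarith [hsol1 t]
    rw [hξ1t]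
    have hang : ω * t + (π / 2 - (θ₀ + β)) = π / 2 - ((θ₀ + β) - ω * t) := by ring
    have hexp : Real.cos (ω * t + (π / 2 - (θ₀ + β))) =
        Real.cos (ω * t) * (Real.sin θ₀ * Real.cos β + Real.cos θ₀ * Real.sin β) -
        Real.sin (ω * t) * (Real.cos θ₀ * Real.cos β - Real.sin θ₀ * Real.sin β) := by
      rw [hang, Real.cos_pi_div_two_sub, Real.sin_sub, Real.sin_add, Real.cos_add]
      ring
    rw [hexp, hcosθ₀, hsinθ₀, hcosβ, hsinβ]
    field_simp
    ring
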